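/- Consider a rooted DAG where each node is a sum node, product node, or leaf, and the value function V is defined recursively: V(leaf) = given positive value, V(product node) = product of children's values, V(sum node) = Σ_j w_j V(child_j) with positive weights. Then for a complete and decomposable such circuit, V(root) evaluated with all weights and leaf values set to 1 equals the number of induced trees of the circuit, where an induced tree contains the root, exactly one child of each included sum node, and all children of each included product node. -/

import Mathlib

open scoped Classical

/-- The kind of a node in a sum-product network. -/
inductive NodeKind | sum | prod | leaf
deriving DecidableEq

/-- A sum-product network (SPN) over variables `X_1, …, X_n`: a rooted DAG with `N` nodes
(indexed so that edges go from larger to smaller indices), where each node is a sum node,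
a product node, or a leaf labelled with a variable, and sum edges carry weights. -/
structure SPN (N n : ℕ) where
  kind : Fin N → NodeKind
  children : Fin N → Finset (Fin N)
  var : Fin N → Fin n
  root : Fin N
  child_lt : ∀ k, ∀ j ∈ children k, j < k
  leaf_iff : ∀ k, kind k = NodeKind.leaf ↔ children k = ∅

namespace SPN

variable {N n : ℕ}

/-- Recursive evaluation of an SPN: leaves return their given values, product nodes multiply
their children's values, sum nodes take weighted sums of their children's values. -/
noncomputable def value (S : SPN N n) (leaf : Fin N → ℝ) (w : Fin N → Fin N → ℝ) :
    Fin N → ℝ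
  | k =>
    match S.kind k with
    | NodeKind.leaf => leaf k
    | NodeKind.prod => ∏ j ∈ (S.children k).attach, value S leaf w j.1
    | NodeKind.sum => ∑ j ∈ (S.children k).attach, w k j.1 * value S leaf w j.1
  termination_by k => (k : ℕ)
  decreasing_by all_goals exact S.child_lt _ _ j.2

/-- Evaluation where the value of the node `k₀` is overridden by the free value `t`
(used to differentiate the root value with respect to the value of node `k₀`). -/
noncomputable def valueAt (S : SPN N n) (leaf : Fin N → ℝ) (w : Fin N → Fin N → ℝ)
    (k₀ : Fin N) (t : ℝ) : Fin N → ℝ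
  | k =>
    if k = k₀ then t else
      match S.kind k with
      | NodeKind.leaf => leaf k
      | NodeKind.prod => ∏ j ∈ (S.children k).attach, valueAt S leaf w k₀ t j.1
      | NodeKind.sum => ∑ j ∈ (S.children k).attach, w k j.1 * valueAt S leaf w k₀ t j.1
  termination_by k => (k : ℕ)
  decreasing_by all_goals exact S.child_lt _ _ j.2

/-- The scope of a node: the set of variables appearing below it. -/
noncomputable def scope (S : SPN N n) : Fin N → Finset (Fin n)
  | k =>
    match S.kind k with
    | NodeKind.leaf => {S.var k}
    | _ => (S.children k).attach.biUnion (fun j => scope S j.1)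
  termination_by k => (k : ℕ)
  decreasing_by all_goals exact S.child_lt _ _ j.2

/-- An SPN is complete if all children of a sum node have the same scope. -/
def Complete (S : SPN N n) : Prop :=
  ∀ k, S.kind k = NodeKind.sum →
    ∀ j₁ ∈ S.children k, ∀ j₂ ∈ S.children k, S.scope j₁ = S.scope j₂

/-- An SPN is decomposable if distinct children of a product node have disjoint scopes. -/
def Decomposable (S : SPN N n) : Prop :=
  ∀ k, S.kind k = NodeKind.prod →
    ∀ j₁ ∈ S.children k, ∀ j₂ ∈ S.children k, j₁ ≠ j₂ →
      Disjoint (S.scope j₁) (S.scope j₂)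

/-- `(TV, TE)` is an induced tree of the SPN `S`: it contains the root; its edges are edges of
`S` between its nodes; every sum node in it has exactly one outgoing edge in it; every product
node in it keeps all its outgoing edges; and every non-root node in it is the endpoint of one
of its edges. -/
def IsInducedTree (S : SPN N n) (TV : Finset (Fin N)) (TE : Finset (Fin N × Fin N)) : Prop :=
  S.root ∈ TV ∧
  (∀ e ∈ TE, e.1 ∈ TV ∧ e.2 ∈ TV ∧ e.2 ∈ S.children e.1) ∧
  (∀ k ∈ TV, S.kind k = NodeKind.sum → ∃! j, j ∈ S.children k ∧ (k, j) ∈ TE) ∧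
  (∀ k ∈ TV, S.kind k = NodeKind.prod → ∀ j ∈ S.children k, (k, j) ∈ TE) ∧
  (∀ k ∈ TV, k ≠ S.root → ∃ e ∈ TE, e.2 = k)

end SPN

namespace SPN

variable {N n : ℕ}

/-- Descendants (inclusive) of a node. -/
noncomputable def desc (S : SPN N n) : Fin N → Finset (Fin N)
  | k => insert k ((S.children k).attach.biUnion fun j => desc S j.1)
  termination_by k => (k : ℕ)
  decreasing_by all_goals exact S.child_lt _ _ j.2

lemma mem_desc_iff {S : SPN N n} {k m : Fin N} :
    m ∈ S.desc k ↔ m = k ∨ ∃ j ∈ S.children k, m ∈ S.desc j := by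
  rw [desc]
  simp [Finset.mem_insert, Finset.mem_biUnion]

lemma self_mem_desc (S : SPN N n) (k : Fin N) : k ∈ S.desc k :=
  mem_desc_iff.2 (Or.inl rfl)

lemma desc_le {S : SPN N n} : ∀ (k : Fin N), ∀ m ∈ S.desc k, m ≤ k
  | k => by
    intro m hm
    rcases mem_desc_iff.1 hm with h | ⟨j, hj, hmj⟩
    · exact h.le
    · exact le_of_lt (lt_of_le_of_lt (desc_le j m hmj) (S.child_lt _ _ hj))
  termination_by k => (k : ℕ)
  decreasing_by exact S.child_lt _ _ hj

lemma desc_closed {S : SPN N n} :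
    ∀ (k : Fin N), ∀ m ∈ S.desc k, ∀ j ∈ S.children m, j ∈ S.desc k
  | k => by
    intro m hm j hj
    rcases mem_desc_iff.1 hm with h | ⟨c, hc, hmc⟩
    · subst h
      exact mem_desc_iff.2 (Or.inr ⟨j, hj, S.self_mem_desc j⟩)
    · exact mem_desc_iff.2 (Or.inr ⟨c, hc, desc_closed c m hmc j hj⟩)
  termination_by k => (k : ℕ)
  decreasing_by exact S.child_lt _ _ hc

lemma scope_nonempty (S : SPN N n) : ∀ (k : Fin N), (S.scope k).Nonempty
  | k => by
    rw [scope]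
    cases hk : S.kind k with
    | leaf => exact ⟨S.var k, Finset.mem_singleton_self _⟩
    | sum =>
      have hne : S.children k ≠ ∅ := fun h => by
        have := (S.leaf_iff k).2 h; rw [hk] at this; exact NodeKind.noConfusion this
      obtain ⟨j, hj⟩ := Finset.nonempty_iff_ne_empty.2 hne
      obtain ⟨x, hx⟩ := scope_nonempty S j
      exact ⟨x, Finset.mem_biUnion.2 ⟨⟨j, hj⟩, Finset.mem_attach _ _, hx⟩⟩
    | prod =>
      have hne : S.children k ≠ ∅ := fun h => by
        have := (S.leaf_iff k).2 h; rw [hk] at this; exact NodeKind.noConfusion this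
      obtain ⟨j, hj⟩ := Finset.nonempty_iff_ne_empty.2 hne
      obtain ⟨x, hx⟩ := scope_nonempty S j
      exact ⟨x, Finset.mem_biUnion.2 ⟨⟨j, hj⟩, Finset.mem_attach _ _, hx⟩⟩
  termination_by k => (k : ℕ)
  decreasing_by all_goals exact S.child_lt _ _ hj

lemma scope_eq_biUnion {S : SPN N n} {k : Fin N} (hk : S.kind k ≠ NodeKind.leaf) :
    S.scope k = (S.children k).attach.biUnion fun j => S.scope j.1 := by
  rw [scope]
  cases hkk : S.kind k with
  | leaf => exact absurd hkk hk
  | sum => rfl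
  | prod => rfl

lemma scope_subset_of_mem_desc {S : SPN N n} :
    ∀ (k : Fin N), ∀ m ∈ S.desc k, S.scope m ⊆ S.scope k
  | k => by
    intro m hm
    rcases mem_desc_iff.1 hm with h | ⟨c, hc, hmc⟩
    · subst h; exact subset_rfl
    · refine (scope_subset_of_mem_desc c m hmc).trans ?_
      have hk : S.kind k ≠ NodeKind.leaf := by
        intro h
        rw [(S.leaf_iff k).1 h] at hc
        exact absurd hc (Finset.notMem_empty _)
      rw [scope_eq_biUnion hk]
      intro x hx
      exact Finset.mem_biUnion.2 ⟨⟨c, hc⟩, Finset.mem_attach _ _, hx⟩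
  termination_by k => (k : ℕ)
  decreasing_by exact S.child_lt _ _ hc

end SPN
namespace SPN

variable {N n : ℕ}

lemma desc_disjoint {S : SPN N n} (hD : S.Decomposable) {k j₁ j₂ : Fin N}
    (hk : S.kind k = NodeKind.prod) (h1 : j₁ ∈ S.children k) (h2 : j₂ ∈ S.children k)
    (hne : j₁ ≠ j₂) {m : Fin N} (hm1 : m ∈ S.desc j₁) (hm2 : m ∈ S.desc j₂) : False := by
  have hd := hD k hk j₁ h1 j₂ h2 hne
  obtain ⟨x, hx⟩ := S.scope_nonempty m
  exact Finset.disjoint_left.1 hd (scope_subset_of_mem_desc j₁ m hm1 hx)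
    (scope_subset_of_mem_desc j₂ m hm2 hx)

/-- An induced tree rooted at an arbitrary node `r`. -/
def IsTreeAt (S : SPN N n) (r : Fin N) (TV : Finset (Fin N))
    (TE : Finset (Fin N × Fin N)) : Prop :=
  r ∈ TV ∧
  (∀ e ∈ TE, e.1 ∈ TV ∧ e.2 ∈ TV ∧ e.2 ∈ S.children e.1) ∧
  (∀ k ∈ TV, S.kind k = NodeKind.sum → ∃! j, j ∈ S.children k ∧ (k, j) ∈ TE) ∧
  (∀ k ∈ TV, S.kind k = NodeKind.prod → ∀ j ∈ S.children k, (k, j) ∈ TE) ∧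
  (∀ k ∈ TV, k ≠ r → ∃ e ∈ TE, e.2 = k)

lemma isInducedTree_iff {S : SPN N n} {TV TE} :
    S.IsInducedTree TV TE ↔ S.IsTreeAt S.root TV TE := Iff.rfl

noncomputable def treeSet (S : SPN N n) (r : Fin N) :
    Finset (Finset (Fin N) × Finset (Fin N × Fin N)) :=
  Finset.univ.filter (fun p => S.IsTreeAt r p.1 p.2)

lemma mem_treeSet {S : SPN N n} {r : Fin N} {p} :
    p ∈ S.treeSet r ↔ S.IsTreeAt r p.1 p.2 := by
  simp [treeSet]

lemma IsTreeAt.tv_le {S : SPN N n} {r TV TE} (h : S.IsTreeAt r TV TE) :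
    ∀ m ∈ TV, m ≤ r := by
  obtain ⟨hr, hedge, -, -, hin⟩ := h
  have hM : TV.max' ⟨r, hr⟩ = r := by
    by_contra hne
    obtain ⟨e, he, he2⟩ := hin _ (TV.max'_mem ⟨r, hr⟩) hne
    obtain ⟨h1, -, h3⟩ := hedge e he
    have := S.child_lt e.1 e.2 h3
    rw [he2] at this
    exact absurd (TV.le_max' e.1 h1) (not_le.2 this)
  intro m hm
  exact hM ▸ TV.le_max' m hm

lemma IsTreeAt.tv_subset_desc {S : SPN N n} {r TV TE} (h : S.IsTreeAt r TV TE) :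
    TV ⊆ S.desc r := by
  obtain ⟨hr, hedge, -, -, hin⟩ := h
  by_contra hsub
  have hne : (TV \ S.desc r).Nonempty := by
    rw [Finset.sdiff_nonempty]; exact fun hs => hsub fun x hx => hs hx
  obtain ⟨M, hMmem, hMmax⟩ :
      ∃ M ∈ TV \ S.desc r, ∀ x ∈ TV \ S.desc r, x ≤ M :=
    ⟨(TV \ S.desc r).max' hne, (TV \ S.desc r).max'_mem hne,
      fun x hx => (TV \ S.desc r).le_max' x hx⟩
  rw [Finset.mem_sdiff] at hMmem
  have hMr : M ≠ r := fun h => hMmem.2 (h ▸ S.self_mem_desc r)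
  obtain ⟨e, he, he2⟩ := hin M hMmem.1 hMr
  obtain ⟨h1, -, h3⟩ := hedge e he
  have hlt : M < e.1 := he2 ▸ S.child_lt e.1 e.2 h3
  by_cases hd : e.1 ∈ S.desc r
  · exact hMmem.2 (he2 ▸ desc_closed r e.1 hd e.2 h3)
  · exact absurd (hMmax e.1 (Finset.mem_sdiff.2 ⟨h1, hd⟩)) (not_le.2 hlt)

/-- The leaf case: the unique tree is `({r}, ∅)`. -/
lemma treeSet_leaf {S : SPN N n} {r : Fin N} (hr : S.kind r = NodeKind.leaf) :
    S.treeSet r = {({r}, (∅ : Finset (Fin N × Fin N)))} := by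
  have hch : S.children r = ∅ := (S.leaf_iff r).1 hr
  ext p
  rw [mem_treeSet, Finset.mem_singleton]
  constructor
  · rintro h
    obtain ⟨hrm, hedge, -, -, hin⟩ := h
    have hTV : p.1 = {r} := by
      ext m
      simp only [Finset.mem_singleton]
      constructor
      · intro hm
        by_contra hmr
        -- take the max of p.1 \ {r}
        have hne : (p.1 \ {r}).Nonempty := ⟨m, Finset.mem_sdiff.2 ⟨hm, by simpa using hmr⟩⟩
        set M := (p.1 \ {r}).max' hne
        have hMmem := (p.1 \ {r}).max'_mem hne
        rw [Finset.mem_sdiff, Finset.mem_singleton] at hMmem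
        obtain ⟨e, he, he2⟩ := hin M hMmem.1 hMmem.2
        obtain ⟨h1, -, h3⟩ := hedge e he
        have hlt : M < e.1 := he2 ▸ S.child_lt e.1 e.2 h3
        rcases eq_or_ne e.1 r with h | h
        · rw [h, hch] at h3; exact absurd h3 (Finset.notMem_empty _)
        · have : e.1 ∈ p.1 \ {r} := Finset.mem_sdiff.2 ⟨h1, by simpa using h⟩
          exact absurd ((p.1 \ {r}).le_max' e.1 this) (not_le.2 hlt)
      · rintro rfl; exact hrm
    have hTE : p.2 = ∅ := by
      rw [Finset.eq_empty_iff_forall_notMem]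
      intro e he
      obtain ⟨h1, -, h3⟩ := hedge e he
      rw [hTV, Finset.mem_singleton] at h1
      rw [h1, hch] at h3
      exact absurd h3 (Finset.notMem_empty _)
    exact Prod.ext hTV hTE
  · rintro rfl
    refine ⟨Finset.mem_singleton_self r, ?_, ?_, ?_, ?_⟩
    · intro e he; exact absurd he (Finset.notMem_empty _)
    · intro k hk hks
      rw [Finset.mem_singleton] at hk
      rw [hk, hr] at hks; exact absurd hks (by simp)
    · intro k hk hkp
      rw [Finset.mem_singleton] at hk
      rw [hk, hr] at hkp; exact absurd hkp (by simp)
    · intro k hk hkr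
      rw [Finset.mem_singleton] at hk
      exact absurd hk hkr

end SPN
namespace SPN

variable {N n : ℕ}

lemma root_not_mem {S : SPN N n} {r j : Fin N} (hj : j ∈ S.children r) {TV TE}
    (h : S.IsTreeAt j TV TE) : r ∉ TV :=
  fun hr => absurd (lt_of_le_of_lt (h.tv_le r hr) (S.child_lt _ _ hj)) (lt_irrefl r)

lemma root_edge_not_mem {S : SPN N n} {r j x : Fin N} (hj : j ∈ S.children r) {TV TE}
    (h : S.IsTreeAt j TV TE) : (r, x) ∉ TE := fun he => by
  obtain ⟨h1, -, -⟩ := h.2.1 (r, x) he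
  exact root_not_mem hj h h1

lemma isTreeAt_sum_insert {S : SPN N n} {r j : Fin N} (hr : S.kind r = NodeKind.sum)
    (hj : j ∈ S.children r) {TV TE} (h : S.IsTreeAt j TV TE) :
    S.IsTreeAt r (insert r TV) (insert (r, j) TE) := by
  obtain ⟨hjm, hedge, hsum, hprod, hin⟩ := h
  refine ⟨Finset.mem_insert_self _ _, ?_, ?_, ?_, ?_⟩
  · intro e he
    rcases Finset.mem_insert.1 he with rfl | he
    · exact ⟨Finset.mem_insert_self _ _, Finset.mem_insert_of_mem hjm, hj⟩
    · obtain ⟨h1, h2, h3⟩ := hedge e he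
      exact ⟨Finset.mem_insert_of_mem h1, Finset.mem_insert_of_mem h2, h3⟩
  · intro k hk hks
    rcases Finset.mem_insert.1 hk with rfl | hk
    · refine ⟨j, ⟨hj, Finset.mem_insert_self _ _⟩, ?_⟩
      rintro j' ⟨-, hj'⟩
      rcases Finset.mem_insert.1 hj' with h | h
      · exact (Prod.mk.injEq _ _ _ _ ▸ h).2
      · exact absurd h (root_edge_not_mem hj ⟨hjm, hedge, hsum, hprod, hin⟩)
    · obtain ⟨j', ⟨hj'1, hj'2⟩, hun⟩ := hsum k hk hks
      have hkr : k ≠ r := fun hkr =>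
        root_not_mem hj ⟨hjm, hedge, hsum, hprod, hin⟩ (hkr ▸ hk)
      refine ⟨j', ⟨hj'1, Finset.mem_insert_of_mem hj'2⟩, ?_⟩
      rintro j'' ⟨hj''1, hj''2⟩
      rcases Finset.mem_insert.1 hj''2 with h | h
      · exact absurd (congrArg Prod.fst h) hkr
      · exact hun j'' ⟨hj''1, h⟩
  · intro k hk hkp
    rcases Finset.mem_insert.1 hk with rfl | hk
    · rw [hr] at hkp; exact absurd hkp (by simp)
    · intro j' hj'
      exact Finset.mem_insert_of_mem (hprod k hk hkp j' hj')
  · intro k hk hkr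
    rcases Finset.mem_insert.1 hk with rfl | hk
    · exact absurd rfl hkr
    · rcases eq_or_ne k j with rfl | hkj
      · exact ⟨(r, k), Finset.mem_insert_self _ _, rfl⟩
      · obtain ⟨e, he, he2⟩ := hin k hk hkj
        exact ⟨e, Finset.mem_insert_of_mem he, he2⟩

lemma treeSet_sum {S : SPN N n} {r : Fin N} (hr : S.kind r = NodeKind.sum) :
    S.treeSet r = (S.children r).biUnion
      (fun j => (S.treeSet j).image fun p => (insert r p.1, insert (r, j) p.2)) := by
  ext p
  rw [mem_treeSet, Finset.mem_biUnion]
  constructor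
  · intro h
    obtain ⟨hrm, hedge, hsum, hprod, hin⟩ := h
    obtain ⟨j, ⟨hj1, hj2⟩, hun⟩ := hsum r hrm hr
    refine ⟨j, hj1, Finset.mem_image.2 ⟨(p.1.erase r, p.2.erase (r, j)), ?_, ?_⟩⟩
    · rw [mem_treeSet]
      have hjr : j ≠ r := ne_of_lt (S.child_lt r j hj1)
      have hjm : j ∈ p.1 := (hedge (r, j) hj2).2.1
      have htvle := IsTreeAt.tv_le ⟨hrm, hedge, hsum, hprod, hin⟩
      have hfst_ne_r : ∀ e ∈ p.2.erase (r, j), e.1 ≠ r := by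
        intro e he her
        have hmem := Finset.mem_of_mem_erase he
        have hne := Finset.ne_of_mem_erase he
        have : e.2 ∈ S.children e.1 := (hedge e hmem).2.2
        have he2j : e.2 = j := hun e.2 ⟨her ▸ this, by rw [← her]; exact hmem⟩
        exact hne (Prod.ext her he2j)
      refine ⟨Finset.mem_erase.2 ⟨hjr, hjm⟩, ?_, ?_, ?_, ?_⟩
      · intro e he
        have hmem := Finset.mem_of_mem_erase he
        obtain ⟨h1, h2, h3⟩ := hedge e hmem
        have h2r : e.2 ≠ r := fun h2r => by
          have := S.child_lt e.1 e.2 h3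
          exact absurd (htvle e.1 h1) (not_le.2 (h2r ▸ this))
        exact ⟨Finset.mem_erase.2 ⟨hfst_ne_r e he, h1⟩, Finset.mem_erase.2 ⟨h2r, h2⟩, h3⟩
      · intro k hk hks
        obtain ⟨hkr, hkm⟩ := Finset.mem_erase.1 hk
        obtain ⟨j', ⟨hj'1, hj'2⟩, hun'⟩ := hsum k hkm hks
        refine ⟨j', ⟨hj'1, Finset.mem_erase.2 ⟨fun hh => hkr (congrArg Prod.fst hh), hj'2⟩⟩, ?_⟩
        rintro j'' ⟨hj''1, hj''2⟩
        exact hun' j'' ⟨hj''1, Finset.mem_of_mem_erase hj''2⟩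
      · intro k hk hkp j' hj'
        obtain ⟨hkr, hkm⟩ := Finset.mem_erase.1 hk
        exact Finset.mem_erase.2 ⟨fun hh => hkr (congrArg Prod.fst hh),
          hprod k hkm hkp j' hj'⟩
      · intro k hk hkj
        obtain ⟨hkr, hkm⟩ := Finset.mem_erase.1 hk
        obtain ⟨e, he, he2⟩ := hin k hkm hkr
        refine ⟨e, Finset.mem_erase.2 ⟨fun hh => hkj (by rw [← he2, hh]), he⟩, he2⟩
    · have h1 : insert r (p.1.erase r) = p.1 := Finset.insert_erase hrm
      have h2 : insert (r, j) (p.2.erase (r, j)) = p.2 := Finset.insert_erase hj2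
      exact Prod.ext h1 h2
  · rintro ⟨j, hj, hp⟩
    obtain ⟨q, hq, rfl⟩ := Finset.mem_image.1 hp
    exact isTreeAt_sum_insert hr hj (mem_treeSet.1 hq)

lemma card_treeSet_sum {S : SPN N n} {r : Fin N} (hr : S.kind r = NodeKind.sum) :
    (S.treeSet r).card = ∑ j ∈ S.children r, (S.treeSet j).card := by
  rw [treeSet_sum hr]
  rw [Finset.card_biUnion]
  · refine Finset.sum_congr rfl fun j hj => ?_
    rw [Finset.card_image_of_injOn]
    intro p hp q hq hpq
    rw [Finset.mem_coe, mem_treeSet] at hp hq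
    have h1 : p.1 = q.1 := by
      have := congrArg Prod.fst hpq
      simp only at this
      have hpr : r ∉ p.1 := root_not_mem hj hp
      have hqr : r ∉ q.1 := root_not_mem hj hq
      rw [← Finset.erase_insert hpr, ← Finset.erase_insert hqr, this]
    have h2 : p.2 = q.2 := by
      have := congrArg Prod.snd hpq
      simp only at this
      have hpr : (r, j) ∉ p.2 := root_edge_not_mem hj hp
      have hqr : (r, j) ∉ q.2 := root_edge_not_mem hj hq
      rw [← Finset.erase_insert hpr, ← Finset.erase_insert hqr, this]
    exact Prod.ext h1 h2
  · intro j₁ hj₁ j₂ hj₂ hne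
    rw [Function.onFun, Finset.disjoint_left]
    intro p hp1 hp2
    obtain ⟨q1, hq1, hq1e⟩ := Finset.mem_image.1 hp1
    obtain ⟨q2, hq2, hq2e⟩ := Finset.mem_image.1 hp2
    rw [mem_treeSet] at hq1 hq2
    have h1 : (r, j₁) ∈ p.2 := by rw [← hq1e]; exact Finset.mem_insert_self _ _
    have h2 : (r, j₂) ∈ p.2 := by rw [← hq2e]; exact Finset.mem_insert_self _ _
    rw [← hq2e] at h1
    rcases Finset.mem_insert.1 h1 with h | h
    · exact hne (by injection h)
    · exact root_edge_not_mem hj₂ hq2 h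

end SPN
namespace SPN

variable {N n : ℕ}

lemma desc_child_lt {S : SPN N n} {r j m : Fin N} (hj : j ∈ S.children r)
    (hm : m ∈ S.desc j) : m < r :=
  lt_of_le_of_lt (desc_le j m hm) (S.child_lt r j hj)

lemma r_not_mem_desc_child {S : SPN N n} {r j : Fin N} (hj : j ∈ S.children r) :
    r ∉ S.desc j := fun h => lt_irrefl r (desc_child_lt hj h)

/-- Restriction of a tree at a product node to the descendants of a child. -/
lemma isTreeAt_restrict {S : SPN N n} (hD : S.Decomposable) {r j : Fin N}
    (hr : S.kind r = NodeKind.prod) (hj : j ∈ S.children r) {TV TE}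
    (h : S.IsTreeAt r TV TE) :
    S.IsTreeAt j (TV ∩ S.desc j) (TE.filter fun e => e.1 ∈ S.desc j) := by
  obtain ⟨hrm, hedge, hsum, hprod, hin⟩ := h
  have htvd : TV ⊆ S.desc r := IsTreeAt.tv_subset_desc ⟨hrm, hedge, hsum, hprod, hin⟩
  have hjm : j ∈ TV := (hedge (r, j) (hprod r hrm hr j hj)).2.1
  refine ⟨Finset.mem_inter.2 ⟨hjm, S.self_mem_desc j⟩, ?_, ?_, ?_, ?_⟩
  · intro e he
    obtain ⟨he', hd⟩ := Finset.mem_filter.1 he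
    obtain ⟨h1, h2, h3⟩ := hedge e he'
    exact ⟨Finset.mem_inter.2 ⟨h1, hd⟩,
      Finset.mem_inter.2 ⟨h2, desc_closed j e.1 hd e.2 h3⟩, h3⟩
  · intro k hk hks
    obtain ⟨hk1, hk2⟩ := Finset.mem_inter.1 hk
    obtain ⟨j₀, ⟨hj₀1, hj₀2⟩, hun⟩ := hsum k hk1 hks
    exact ⟨j₀, ⟨hj₀1, Finset.mem_filter.2 ⟨hj₀2, hk2⟩⟩,
      fun j' ⟨hj'1, hj'2⟩ => hun j' ⟨hj'1, (Finset.mem_filter.1 hj'2).1⟩⟩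
  · intro k hk hkp j' hj'
    obtain ⟨hk1, hk2⟩ := Finset.mem_inter.1 hk
    exact Finset.mem_filter.2 ⟨hprod k hk1 hkp j' hj', hk2⟩
  · intro k hk hkj
    obtain ⟨hk1, hk2⟩ := Finset.mem_inter.1 hk
    have hkr : k ≠ r := fun hh => r_not_mem_desc_child hj (hh ▸ hk2)
    obtain ⟨e, he, he2⟩ := hin k hk1 hkr
    obtain ⟨h1, h2, h3⟩ := hedge e he
    have he1r : e.1 ≠ r := by
      rintro h1r
      have hkc : k ∈ S.children r := h1r ▸ he2 ▸ h3
      exact desc_disjoint hD hr hj hkc (Ne.symm hkj) hk2 (he2 ▸ S.self_mem_desc e.2)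
    have he1d : e.1 ∈ S.desc j := by
      rcases mem_desc_iff.1 (htvd h1) with h | ⟨j', hj', hd'⟩
      · exact absurd h he1r
      · have hkd' : k ∈ S.desc j' := he2 ▸ desc_closed j' e.1 hd' e.2 h3
        rcases eq_or_ne j' j with rfl | hne
        · exact hd'
        · exact absurd (desc_disjoint hD hr hj' hj hne hkd' hk2) not_false
    exact ⟨e, Finset.mem_filter.2 ⟨he, he1d⟩, he2⟩

/-- Combining trees at each child of a product node into a tree at the node. -/
lemma isTreeAt_combine {S : SPN N n} (hD : S.Decomposable) {r : Fin N}
    (hr : S.kind r = NodeKind.prod)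
    (f : {x // x ∈ S.children r} → Finset (Fin N) × Finset (Fin N × Fin N))
    (hf : ∀ a, S.IsTreeAt a.1 (f a).1 (f a).2) :
    S.IsTreeAt r (insert r ((S.children r).attach.biUnion fun a => (f a).1))
      (((S.children r).image fun j => (r, j)) ∪
        (S.children r).attach.biUnion fun a => (f a).2) := by
  have hmemTV : ∀ (a : {x // x ∈ S.children r}), ∀ m ∈ (f a).1,
      m ∈ insert r ((S.children r).attach.biUnion fun a => (f a).1) :=
    fun a m hm => Finset.mem_insert_of_mem
      (Finset.mem_biUnion.2 ⟨a, Finset.mem_attach _ _, hm⟩)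
  refine ⟨Finset.mem_insert_self _ _, ?_, ?_, ?_, ?_⟩
  · intro e he
    rcases Finset.mem_union.1 he with he | he
    · obtain ⟨j, hj, hje⟩ := Finset.mem_image.1 he
      subst hje
      exact ⟨Finset.mem_insert_self _ _, hmemTV ⟨j, hj⟩ j (hf ⟨j, hj⟩).1, hj⟩
    · obtain ⟨a, -, hea⟩ := Finset.mem_biUnion.1 he
      obtain ⟨h1, h2, h3⟩ := (hf a).2.1 e hea
      exact ⟨hmemTV a e.1 h1, hmemTV a e.2 h2, h3⟩
  · intro k hk hks
    rcases Finset.mem_insert.1 hk with rfl | hk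
    · rw [hr] at hks; exact absurd hks (by simp)
    · obtain ⟨a, -, hka⟩ := Finset.mem_biUnion.1 hk
      obtain ⟨j₀, ⟨hj₀1, hj₀2⟩, hun⟩ := (hf a).2.2.1 k hka hks
      have hkd : k ∈ S.desc a.1 := (hf a).tv_subset_desc hka
      refine ⟨j₀, ⟨hj₀1, Finset.mem_union_right _
        (Finset.mem_biUnion.2 ⟨a, Finset.mem_attach _ _, hj₀2⟩)⟩, ?_⟩
      rintro j' ⟨hj'1, hj'2⟩
      rcases Finset.mem_union.1 hj'2 with hh | hh
      · obtain ⟨j'', hj'', hje⟩ := Finset.mem_image.1 hh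
        have : k = r := (Prod.mk.injEq _ _ _ _ ▸ hje.symm).1
        exact absurd this (ne_of_lt (desc_child_lt a.2 hkd))
      · obtain ⟨b, -, heb⟩ := Finset.mem_biUnion.1 hh
        have hkb : k ∈ S.desc b.1 := (hf b).tv_subset_desc ((hf b).2.1 _ heb).1
        have hab : a = b := by
          by_contra hne
          exact desc_disjoint hD hr a.2 b.2 (fun hc => hne (Subtype.ext hc)) hkd hkb
        exact hun j' ⟨hj'1, hab ▸ heb⟩
  · intro k hk hkp j' hj'
    rcases Finset.mem_insert.1 hk with rfl | hk
    · exact Finset.mem_union_left _ (Finset.mem_image.2 ⟨j', hj', rfl⟩)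
    · obtain ⟨a, -, hka⟩ := Finset.mem_biUnion.1 hk
      exact Finset.mem_union_right _ (Finset.mem_biUnion.2
        ⟨a, Finset.mem_attach _ _, (hf a).2.2.2.1 k hka hkp j' hj'⟩)
  · intro k hk hkr
    rcases Finset.mem_insert.1 hk with rfl | hk
    · exact absurd rfl hkr
    · obtain ⟨a, -, hka⟩ := Finset.mem_biUnion.1 hk
      rcases eq_or_ne k a.1 with h | hne
      · exact ⟨(r, k), Finset.mem_union_left _ (Finset.mem_image.2 ⟨k, h ▸ a.2, rfl⟩), rfl⟩
      · obtain ⟨e, he, he2⟩ := (hf a).2.2.2.2 k hka hne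
        exact ⟨e, Finset.mem_union_right _
          (Finset.mem_biUnion.2 ⟨a, Finset.mem_attach _ _, he⟩), he2⟩

end SPN
namespace SPN

variable {N n : ℕ}

/-- Combining then restricting recovers the original family. -/
lemma restrict_combine {S : SPN N n} (hD : S.Decomposable) {r : Fin N}
    (hr : S.kind r = NodeKind.prod)
    (f : {x // x ∈ S.children r} → Finset (Fin N) × Finset (Fin N × Fin N))
    (hf : ∀ a, S.IsTreeAt a.1 (f a).1 (f a).2) (a : {x // x ∈ S.children r}) :
    (insert r ((S.children r).attach.biUnion fun b => (f b).1)) ∩ S.desc a.1 = (f a).1 ∧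
    ((((S.children r).image fun j => (r, j)) ∪
        (S.children r).attach.biUnion fun b => (f b).2).filter
      fun e => e.1 ∈ S.desc a.1) = (f a).2 := by
  constructor
  · ext m
    rw [Finset.mem_inter, Finset.mem_insert, Finset.mem_biUnion]
    constructor
    · rintro ⟨rfl | ⟨b, -, hmb⟩, hd⟩
      · exact absurd hd (r_not_mem_desc_child a.2)
      · have hmd : m ∈ S.desc b.1 := (hf b).tv_subset_desc hmb
        have hab : a = b := by
          by_contra hne
          exact desc_disjoint hD hr a.2 b.2 (fun hc => hne (Subtype.ext hc)) hd hmd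
        exact hab ▸ hmb
    · intro hm
      exact ⟨Or.inr ⟨a, Finset.mem_attach _ _, hm⟩, (hf a).tv_subset_desc hm⟩
  · ext e
    rw [Finset.mem_filter, Finset.mem_union, Finset.mem_biUnion]
    constructor
    · rintro ⟨himg | ⟨b, -, heb⟩, hd⟩
      · obtain ⟨j, -, hje⟩ := Finset.mem_image.1 himg
        have : e.1 = r := (Prod.mk.injEq _ _ _ _ ▸ hje.symm).1
        exact absurd (this ▸ hd) (r_not_mem_desc_child a.2)
      · have h1 : e.1 ∈ (f b).1 := ((hf b).2.1 e heb).1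
        have hmd : e.1 ∈ S.desc b.1 := (hf b).tv_subset_desc h1
        have hab : a = b := by
          by_contra hne
          exact desc_disjoint hD hr a.2 b.2 (fun hc => hne (Subtype.ext hc)) hd hmd
        exact hab ▸ heb
    · intro he
      exact ⟨Or.inr ⟨a, Finset.mem_attach _ _, he⟩,
        (hf a).tv_subset_desc (((hf a).2.1 e he).1)⟩

/-- Restricting then combining recovers the original tree. -/
lemma combine_restrict {S : SPN N n} {r : Fin N}
    (hr : S.kind r = NodeKind.prod) {TV TE} (h : S.IsTreeAt r TV TE) :
    insert r ((S.children r).attach.biUnion fun a => TV ∩ S.desc a.1) = TV ∧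
    (((S.children r).image fun j => (r, j)) ∪
        (S.children r).attach.biUnion fun a => TE.filter fun e => e.1 ∈ S.desc a.1) = TE := by
  obtain ⟨hrm, hedge, hsum, hprod, hin⟩ := h
  have htvd : TV ⊆ S.desc r := IsTreeAt.tv_subset_desc ⟨hrm, hedge, hsum, hprod, hin⟩
  constructor
  · ext m
    rw [Finset.mem_insert, Finset.mem_biUnion]
    constructor
    · rintro (rfl | ⟨a, -, hma⟩)
      · exact hrm
      · exact (Finset.mem_inter.1 hma).1
    · intro hm
      rcases mem_desc_iff.1 (htvd hm) with h | ⟨j, hj, hd⟩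
      · exact Or.inl h
      · exact Or.inr ⟨⟨j, hj⟩, Finset.mem_attach _ _, Finset.mem_inter.2 ⟨hm, hd⟩⟩
  · ext e
    rw [Finset.mem_union, Finset.mem_biUnion]
    constructor
    · rintro (himg | ⟨a, -, hea⟩)
      · obtain ⟨j, hj, hje⟩ := Finset.mem_image.1 himg
        exact hje ▸ hprod r hrm hr j hj
      · exact (Finset.mem_filter.1 hea).1
    · intro he
      obtain ⟨h1, h2, h3⟩ := hedge e he
      rcases mem_desc_iff.1 (htvd h1) with h | ⟨j, hj, hd⟩
      · refine Or.inl (Finset.mem_image.2 ⟨e.2, h ▸ h3, ?_⟩)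
        rw [← h]
      · exact Or.inr ⟨⟨j, hj⟩, Finset.mem_attach _ _, Finset.mem_filter.2 ⟨he, hd⟩⟩

set_option maxHeartbeats 1000000 in
lemma card_treeSet_prod {S : SPN N n} (hD : S.Decomposable) {r : Fin N}
    (hr : S.kind r = NodeKind.prod) :
    (S.treeSet r).card = ∏ j ∈ S.children r, (S.treeSet j).card := by
  have E : {p // p ∈ S.treeSet r} ≃
      (∀ a : {x // x ∈ S.children r}, {p // p ∈ S.treeSet a.1}) :=
    { toFun := fun p a => ⟨(p.1.1 ∩ S.desc a.1, p.1.2.filter fun e => e.1 ∈ S.desc a.1),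
        mem_treeSet.2 (isTreeAt_restrict hD hr a.2 (mem_treeSet.1 p.2))⟩
      invFun := fun f => ⟨(insert r ((S.children r).attach.biUnion fun a => (f a).1.1),
          ((S.children r).image fun j => (r, j)) ∪
            (S.children r).attach.biUnion fun a => (f a).1.2),
        mem_treeSet.2 (isTreeAt_combine hD hr (fun a => (f a).1)
          (fun a => mem_treeSet.1 (f a).2))⟩
      left_inv := by
        rintro ⟨p, hp⟩
        have h := combine_restrict hr (mem_treeSet.1 hp)
        exact Subtype.ext (Prod.ext h.1 h.2)
      right_inv := by
        intro f
        funext a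
        have h := restrict_combine hD hr (fun a => (f a).1)
          (fun a => mem_treeSet.1 (f a).2) a
        exact Subtype.ext (Prod.ext h.1 h.2) }
  calc (S.treeSet r).card = Nat.card {p // p ∈ S.treeSet r} :=
        (Nat.card_eq_finsetCard _).symm
    _ = Nat.card (∀ a : {x // x ∈ S.children r}, {p // p ∈ S.treeSet a.1}) :=
        Nat.card_congr E
    _ = ∏ a : {x // x ∈ S.children r}, Nat.card {p // p ∈ S.treeSet a.1} :=
        Nat.card_pi
    _ = ∏ j ∈ S.children r, (S.treeSet j).card := by
        rw [Finset.univ_eq_attach,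
          ← Finset.prod_attach (S.children r) (fun j => (S.treeSet j).card)]
        exact Finset.prod_congr rfl fun a _ => Nat.card_eq_finsetCard _

end SPN
namespace SPN

variable {N n : ℕ}

lemma value_leaf {S : SPN N n} {l w} {k : Fin N} (hk : S.kind k = NodeKind.leaf) :
    S.value l w k = l k := by
  rw [value, hk]

lemma value_sum {S : SPN N n} {l w} {k : Fin N} (hk : S.kind k = NodeKind.sum) :
    S.value l w k = ∑ j ∈ (S.children k).attach, w k j.1 * S.value l w j.1 := by
  rw [value, hk]

lemma value_prod {S : SPN N n} {l w} {k : Fin N} (hk : S.kind k = NodeKind.prod) :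
    S.value l w k = ∏ j ∈ (S.children k).attach, S.value l w j.1 := by
  rw [value, hk]

lemma value_ones_eq_card_treeSet (S : SPN N n) (hD : S.Decomposable) :
    ∀ r : Fin N, S.value (fun _ => 1) (fun _ _ => 1) r = ((S.treeSet r).card : ℝ)
  | r => by
    have hrec : ∀ j ∈ S.children r,
        S.value (fun _ => 1) (fun _ _ => 1) j = ((S.treeSet j).card : ℝ) :=
      fun j hj => value_ones_eq_card_treeSet S hD j
    cases hk : S.kind r with
    | leaf =>
      rw [value_leaf hk, treeSet_leaf hk]
      simp
    | sum =>
      rw [value_sum hk, card_treeSet_sum hk]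
      push_cast
      rw [← Finset.sum_attach (S.children r) (fun j => ((S.treeSet j).card : ℝ))]
      refine Finset.sum_congr rfl fun j _ => ?_
      show (1 : ℝ) * S.value (fun _ => 1) (fun _ _ => 1) j.1 = _
      rw [one_mul, hrec j.1 j.2]
    | prod =>
      rw [value_prod hk, card_treeSet_prod hD hk]
      push_cast
      rw [← Finset.prod_attach (S.children r) (fun j => ((S.treeSet j).card : ℝ))]
      exact Finset.prod_congr rfl fun j _ => hrec j.1 j.2
  termination_by r => (r : ℕ)
  decreasing_by exact S.child_lt _ _ hj

end SPN
/-- For a complete and decomposable SPN, the root value evaluated with all sum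
weights and all leaf values set to `1` equals the number of induced trees of the circuit. -/
theorem SPN.value_ones_eq_card_induced_trees {N n : ℕ} (S : SPN N n)
    (hC : S.Complete) (hD : S.Decomposable) :
    S.value (fun _ => 1) (fun _ _ => 1) S.root
      = Nat.card {p : Finset (Fin N) × Finset (Fin N × Fin N) // S.IsInducedTree p.1 p.2} := by
  rw [value_ones_eq_card_treeSet S hD S.root]
  congr 1
  rw [← Nat.card_eq_finsetCard (S.treeSet S.root)]
  exact Nat.card_congr (Equiv.subtypeEquivRight fun p => by
    rw [mem_treeSet, isInducedTree_iff]).symm
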